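/- Let X = ⨆_{k≥1} D^{k+1} be the disjoint union of disks of strictly increasing dimension, A = ⨆_{k≥1} S^k their boundary spheres, Y = [0,1], and f : A → Y given on the k-th sphere by the constant map with value 1/k. In the closure-space pushout (Z, c_Z), with U = ⨆_k (D^{k+1} \ S^k) ⊆ Z, one has c_Z U = U ∪ {1/k : k ≥ 1} and c_Z(c_Z U) = U ∪ {1/k : k ≥ 1} ∪ {0}; hence c_Z is not idempotent and (Z, c_Z) is not a topological space. -/

import Mathlib

open Classical in
/-- The map `g : X → Z = Y ⊔ (X \ A)` of the pushout of `f : A → Y` along `A ↪ X`: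
`g = f` on `A` and the identity on `X \ A`. -/
noncomputable def pushoutMap {X Y : Type*} (A : Set X) (f : X → Y) (x : X) :
    Y ⊕ {x : X // x ∉ A} :=
  if h : x ∈ A then Sum.inl (f x) else Sum.inr ⟨x, h⟩

/-- The closure operator of the pushout `Z = Y ⊔ (X \ A)`:
`c_Z B = c_Y (B ∩ Y) ∪ g (c_X (B ∩ (X \ A)))`. -/
noncomputable def pushoutClosure {X Y : Type*} (A : Set X) (f : X → Y)
    (cX : Set X → Set X) (cY : Set Y → Set Y)
    (B : Set (Y ⊕ {x : X // x ∉ A})) : Set (Y ⊕ {x : X // x ∉ A}) :=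
  Sum.inl '' cY (Sum.inl ⁻¹' B) ∪
    pushoutMap A f '' cX (Subtype.val '' (Sum.inr ⁻¹' B))


open Filter

/-- Radial approximation: every point of the closed unit ball is in the closure of the
set of points of norm `≠ 1`. -/
lemma aux_ball_closure {E : Type*} [NormedAddCommGroup E] [NormedSpace ℝ E]
    (p : ↥(Metric.closedBall (0 : E) 1)) :
    p ∈ closure {x : ↥(Metric.closedBall (0 : E) 1) | ¬ ‖(x : E)‖ = 1} := by
  have hmem : ∀ n : ℕ, (1 - 1 / (n + 1) : ℝ) • (p : E) ∈ Metric.closedBall (0 : E) 1 := by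
    intro n
    have h0 : (0:ℝ) ≤ 1 - 1/(n+1) := by
      have : (1:ℝ)/(n+1) ≤ 1 := by
        rw [div_le_one (by positivity)]; linarith [Nat.cast_nonneg (α := ℝ) n]
      linarith
    have hp : ‖(p : E)‖ ≤ 1 := by
      have := p.2; rwa [Metric.mem_closedBall, dist_zero_right] at this
    rw [Metric.mem_closedBall, dist_zero_right, norm_smul, Real.norm_eq_abs, abs_of_nonneg h0]
    calc (1 - 1/(n+1):ℝ) * ‖(p:E)‖ ≤ 1 * 1 := by
          apply mul_le_mul (by linarith [show (0:ℝ) < 1/(n+1) by positivity]) hp (norm_nonneg _) zero_le_one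
      _ = 1 := by ring
  have hlt : ∀ n : ℕ, ‖(1 - 1 / (n + 1) : ℝ) • (p : E)‖ < 1 := by
    intro n
    have h0 : (0:ℝ) ≤ 1 - 1/(n+1) := by
      have : (1:ℝ)/(n+1) ≤ 1 := by
        rw [div_le_one (by positivity)]; linarith [Nat.cast_nonneg (α := ℝ) n]
      linarith
    have hp : ‖(p : E)‖ ≤ 1 := by
      have := p.2; rwa [Metric.mem_closedBall, dist_zero_right] at this
    rw [norm_smul, Real.norm_eq_abs, abs_of_nonneg h0]
    calc (1 - 1/(n+1):ℝ) * ‖(p:E)‖ ≤ (1 - 1/(n+1)) * 1 := by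
          apply mul_le_mul_of_nonneg_left hp h0
      _ < 1 := by nlinarith [show (0:ℝ) < 1/(n+1) by positivity]
  refine mem_closure_of_tendsto (b := atTop) (f := fun n : ℕ => (⟨(1 - 1/(n+1):ℝ) • (p : E), hmem n⟩ :
      ↥(Metric.closedBall (0 : E) 1))) ?_ (Eventually.of_forall fun n => ?_)
  · rw [tendsto_subtype_rng]
    have : Tendsto (fun n : ℕ => (1 - 1/(n+1) : ℝ)) atTop (nhds 1) := by
      have : Tendsto (fun n : ℕ => 1 / ((n : ℝ) + 1)) atTop (nhds 0) := tendsto_one_div_add_atTop_nhds_zero_nat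
      have h := (tendsto_const_nhds (x := (1:ℝ)) (f := atTop (α := ℕ))).sub this
      simpa using h
    simpa using this.smul_const (p : E)
  · exact ne_of_lt (hlt n)

/-- Closure of `{1/k : k ≥ 1}` in `[0,1]` is itself together with `0`. -/
lemma aux_Icc_closure :
    closure {y : ↥(Set.Icc (0:ℝ) 1) | ∃ k : ℕ, 1 ≤ k ∧ (y : ℝ) = 1 / k} =
      {y : ↥(Set.Icc (0:ℝ) 1) | ∃ k : ℕ, 1 ≤ k ∧ (y : ℝ) = 1 / k} ∪
        {y : ↥(Set.Icc (0:ℝ) 1) | (y : ℝ) = 0} := by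
  set S : Set ↥(Set.Icc (0:ℝ) 1) := {y | ∃ k : ℕ, 1 ≤ k ∧ (y : ℝ) = 1 / k} with hS
  have hT : IsClosed (insert (0:ℝ) (Set.range fun n : ℕ => 1/((n:ℝ)+1))) :=
    (tendsto_one_div_add_atTop_nhds_zero_nat.isCompact_insert_range).isClosed
  apply le_antisymm
  · have hsub : S ⊆ Subtype.val ⁻¹' (insert (0:ℝ) (Set.range fun n : ℕ => 1/((n:ℝ)+1))) := by
      rintro y ⟨k, hk, hy⟩
      right
      refine ⟨k - 1, ?_⟩
      have : ((k - 1 : ℕ) : ℝ) + 1 = (k : ℝ) := by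
        have : k - 1 + 1 = k := Nat.succ_pred_eq_of_pos hk
        exact_mod_cast congrArg (Nat.cast (R := ℝ)) this
      simp only [this, hy]
    have := closure_minimal hsub (hT.preimage continuous_subtype_val)
    intro y hy
    rcases this hy with h0 | ⟨n, hn⟩
    · exact Or.inr h0
    · exact Or.inl ⟨n + 1, Nat.le_add_left 1 n, by push_cast; linarith [hn]⟩
  · rintro y (hy | hy)
    · exact subset_closure hy
    · have hmem : ∀ n : ℕ, (1/((n:ℝ)+1)) ∈ Set.Icc (0:ℝ) 1 := by
        intro n
        constructor
        · positivity
        · rw [div_le_one (by positivity)]; linarith [Nat.cast_nonneg (α := ℝ) n]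
      refine mem_closure_of_tendsto (b := atTop) (f := fun n : ℕ => (⟨1/((n:ℝ)+1), hmem n⟩ :
          ↥(Set.Icc (0:ℝ) 1))) ?_ (Eventually.of_forall fun n => ⟨n+1, Nat.le_add_left 1 n, by push_cast; ring⟩)
      rw [tendsto_subtype_rng, hy]
      exact tendsto_one_div_add_atTop_nhds_zero_nat


namespace Ex33

abbrev J : Type := {k : ℕ // 1 ≤ k}
abbrev X : Type := (k : J) × ↥(Metric.closedBall (0 : EuclideanSpace ℝ (Fin (k.1 + 1))) 1)
abbrev A : Set X := {p | ‖(p.2 : EuclideanSpace ℝ (Fin (p.1.1 + 1)))‖ = 1}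
abbrev Y : Type := ↥(Set.Icc (0 : ℝ) 1)
noncomputable abbrev f : X → Y := fun p =>
  ⟨1 / (p.1.1 : ℝ), ⟨by positivity,
    div_le_one_of_le₀ (by exact_mod_cast p.1.2) (by positivity)⟩⟩
abbrev cX : Set X → Set X := fun S => {p | p.2 ∈ closure {x | (⟨p.1, x⟩ : X) ∈ S}}
abbrev cY : Set Y → Set Y := fun S => closure S
noncomputable abbrev cZ := pushoutClosure A f cX cY
abbrev U : Set (Y ⊕ {x : X // x ∉ A}) := Set.range Sum.inr
abbrev S : Set Y := {y : Y | ∃ k : ℕ, 1 ≤ k ∧ (y : ℝ) = 1 / k}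
abbrev S0 : Set Y := {y : Y | (y : ℝ) = 0}

theorem key :
    cZ U = U ∪ Sum.inl '' S ∧
    cZ (cZ U) = U ∪ Sum.inl '' (S ∪ S0) ∧
    cZ (cZ U) ≠ cZ U := by
  -- `X \ A` is all of `X` under closure
  have hXuniv : cX (Subtype.val '' (Set.univ : Set {x : X // x ∉ A})) = Set.univ := by
    apply Set.eq_univ_of_forall
    intro p
    show p.2 ∈ closure {x | (⟨p.1, x⟩ : X) ∈ Subtype.val '' (Set.univ : Set {x : X // x ∉ A})}
    have hset : {x | (⟨p.1, x⟩ : X) ∈ Subtype.val '' (Set.univ : Set {x : X // x ∉ A})} =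
        {x : ↥(Metric.closedBall (0 : EuclideanSpace ℝ (Fin (p.1.1 + 1))) 1) |
          ¬ ‖(x : EuclideanSpace ℝ (Fin (p.1.1 + 1)))‖ = 1} := by
      ext x
      simp only [Set.mem_setOf_eq, Set.mem_image, Set.mem_univ, true_and]
      constructor
      · rintro ⟨w, hw⟩
        exact show (⟨p.1, x⟩ : X) ∉ A from hw ▸ w.2
      · intro h
        exact ⟨⟨⟨p.1, x⟩, h⟩, rfl⟩
    rw [hset]
    exact aux_ball_closure _
  -- the range of the pushout map
  have hrange : Set.range (pushoutMap A f) = U ∪ Sum.inl '' S := by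
    ext z
    constructor
    · rintro ⟨x, rfl⟩
      by_cases h : x ∈ A
      · right
        exact ⟨f x, ⟨x.1.1, x.1.2, rfl⟩, by simp [pushoutMap, h]⟩
      · left
        exact ⟨⟨x, h⟩, by simp [pushoutMap, h]⟩
    · rintro (⟨w, rfl⟩ | ⟨y, ⟨k, hk, hy⟩, rfl⟩)
      · exact ⟨w.1, by simp [pushoutMap, w.2]⟩
      · have he : ‖(EuclideanSpace.single (0 : Fin (k + 1)) (1:ℝ))‖ = 1 := by
          rw [EuclideanSpace.norm_single]; norm_num
        have heB : EuclideanSpace.single (0 : Fin (k + 1)) (1:ℝ) ∈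
            Metric.closedBall (0 : EuclideanSpace ℝ (Fin (k + 1))) 1 := by
          rw [Metric.mem_closedBall, dist_zero_right, he]
        refine ⟨⟨⟨k, hk⟩, ⟨EuclideanSpace.single (0 : Fin (k + 1)) (1:ℝ), heB⟩⟩, ?_⟩
        have hxA : (⟨⟨k, hk⟩, ⟨EuclideanSpace.single (0 : Fin (k + 1)) (1:ℝ), heB⟩⟩ : X) ∈ A := he
        simp only [pushoutMap, dif_pos hxA]
        congr 1
        exact Subtype.ext hy.symm
  have hU : (Sum.inr ⁻¹' U : Set {x : X // x ∉ A}) = Set.univ := Set.preimage_range _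
  have hUinl : (Sum.inl ⁻¹' U : Set Y) = ∅ := Set.preimage_inl_range_inr
  -- first claim
  have h1 : cZ U = U ∪ Sum.inl '' S := by
    show Sum.inl '' closure (Sum.inl ⁻¹' U) ∪
      pushoutMap A f '' cX (Subtype.val '' (Sum.inr ⁻¹' U)) = U ∪ Sum.inl '' S
    rw [hUinl, hU, closure_empty, Set.image_empty, Set.empty_union, hXuniv, Set.image_univ,
      hrange]
  -- second claim
  have h2 : cZ (cZ U) = U ∪ Sum.inl '' (S ∪ S0) := by
    rw [h1]
    show Sum.inl '' closure (Sum.inl ⁻¹' (U ∪ Sum.inl '' S)) ∪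
      pushoutMap A f '' cX (Subtype.val '' (Sum.inr ⁻¹' (U ∪ Sum.inl '' S))) =
        U ∪ Sum.inl '' (S ∪ S0)
    have e2 : Sum.inl ⁻¹' (U ∪ Sum.inl '' S) = S := by
      rw [Set.preimage_union, hUinl, Set.empty_union,
        Set.preimage_image_eq _ Sum.inl_injective]
    have e3 : Sum.inr ⁻¹' (U ∪ Sum.inl '' S) = (Set.univ : Set {x : X // x ∉ A}) := by
      rw [Set.preimage_union, hU, Set.univ_union]
    rw [e2, e3, hXuniv, Set.image_univ, hrange]
    have hcS : closure S = S ∪ S0 := aux_Icc_closure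
    rw [hcS, Set.image_union]
    ext z
    simp only [Set.mem_union, Set.image_union]
    tauto
  refine ⟨h1, h2, ?_⟩
  rw [h2, h1]
  intro h
  have hy0 : (⟨(0:ℝ), by norm_num⟩ : Y) ∈ S0 := rfl
  have hmem : Sum.inl (⟨(0:ℝ), by norm_num⟩ : Y) ∈ U ∪ Sum.inl '' (S ∪ S0) :=
    Or.inr ⟨_, Or.inr hy0, rfl⟩
  rw [h] at hmem
  rcases hmem with ⟨w, hw⟩ | ⟨y, hy, hyy⟩
  · cases hw
  · have hyS : y ∈ S := hy
    obtain ⟨k, hk, hk'⟩ := hyS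
    have h0 : (y : ℝ) = 0 := by rw [Sum.inl_injective hyy]
    have hkpos : (0:ℝ) < 1 / k := by
      have : (0:ℝ) < k := by exact_mod_cast hk
      positivity
    rw [h0] at hk'
    linarith

end Ex33

/-- Example 3.3: attach cells of strictly increasing dimension to `[0, 1]`: the `k`-th
cell (`k ≥ 1`) is a `(k+1)`-disk attached along the constant map `S^k → [0,1]` with
value `1/k`.  `X = ⨆_{k ≥ 1} D^{k+1}` carries the componentwise topological closure and
`A = ⨆_{k ≥ 1} S^k` is the coproduct of the boundary spheres.  In the closure-space
pushout `(Z, c_Z)`, with `U = ⨆_k (D^{k+1} \ S^k)`, one has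
`c_Z U = U ∪ {1/k : k ≥ 1}` and `c_Z² U = U ∪ {1/k : k ≥ 1} ∪ {0}`; hence `c_Z` is not
idempotent and `(Z, c_Z)` is not a topological space. -/
theorem finite_type_cell_attachment_not_topological :
    letI J : Type := {k : ℕ // 1 ≤ k}
    letI X : Type := (k : J) × ↥(Metric.closedBall (0 : EuclideanSpace ℝ (Fin (k.1 + 1))) 1)
    letI A : Set X := {p | ‖(p.2 : EuclideanSpace ℝ (Fin (p.1.1 + 1)))‖ = 1}
    letI Y : Type := ↥(Set.Icc (0 : ℝ) 1)
    letI f : X → Y := fun p =>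
      ⟨1 / (p.1.1 : ℝ), ⟨by positivity,
        div_le_one_of_le₀ (by exact_mod_cast p.1.2) (by positivity)⟩⟩
    letI cX : Set X → Set X := fun S => {p | p.2 ∈ closure {x | (⟨p.1, x⟩ : X) ∈ S}}
    letI cY : Set Y → Set Y := fun S => closure S
    letI cZ := pushoutClosure A f cX cY
    letI U : Set (Y ⊕ {x : X // x ∉ A}) := Set.range Sum.inr
    cZ U = U ∪ Sum.inl '' {y : Y | ∃ k : ℕ, 1 ≤ k ∧ (y : ℝ) = 1 / k} ∧
    cZ (cZ U) =
      U ∪ Sum.inl '' ({y : Y | ∃ k : ℕ, 1 ≤ k ∧ (y : ℝ) = 1 / k} ∪ {y : Y | (y : ℝ) = 0}) ∧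
    cZ (cZ U) ≠ cZ U := by
  exact Ex33.key
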